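/- Let A, B : ℝ → ℝ be continuous functions such that for all x in a neighborhood of 0 in ℝ, (x + A(−x²))² + B(−x²) = 0. Then A(t) = 0 and B(t) = t for all t ≤ 0 in a neighborhood of 0. -/
import Mathlib


theorem stmt4 (A B : ℝ → ℝ) (hA : Continuous A) (hB : Continuous B)
    (ε : ℝ) (hε : 0 < ε)
    (h : ∀ x : ℝ, |x| < ε → (x + A (-x ^ 2)) ^ 2 + B (-x ^ 2) = 0) :
    ∃ δ > 0, ∀ t : ℝ, -δ < t → t ≤ 0 → A t = 0 ∧ B t = t := by
  have key : ∀ x : ℝ, 0 < x → x < ε → A (-x ^ 2) = 0 ∧ B (-x ^ 2) = -x ^ 2 := by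
    intro x hx hxε
    have h1 := h x (by rw [abs_of_pos hx]; exact hxε)
    have h2 := h (-x) (by rw [abs_neg, abs_of_pos hx]; exact hxε)
    rw [neg_pow, show (-1:ℝ)^2 = 1 by norm_num, one_mul] at h2
    have hA0 : A (-x ^ 2) = 0 := by nlinarith [h1, h2, hx]
    refine ⟨hA0, ?_⟩
    rw [hA0] at h1
    nlinarith [h1]
  have hA0 : A 0 = 0 := by
    have t1 : Filter.Tendsto (fun x : ℝ => A (-x ^ 2)) (nhdsWithin 0 (Set.Ioi 0))
        (nhds (A (-(0:ℝ) ^ 2))) :=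
      ((hA.comp (by continuity)).continuousAt.continuousWithinAt).tendsto
    have t2 : Filter.Tendsto (fun x : ℝ => A (-x ^ 2)) (nhdsWithin 0 (Set.Ioi 0)) (nhds 0) := by
      apply Filter.Tendsto.congr' _ tendsto_const_nhds
      filter_upwards [Ioo_mem_nhdsGT_of_mem (Set.mem_Ico.2 ⟨le_refl (0:ℝ), hε⟩)] with x hx
      exact ((key x hx.1 hx.2).1).symm
    have := tendsto_nhds_unique t1 t2
    simpa using this
  have hB0 : B 0 = 0 := by
    have h0 := h 0 (by simpa using hε)
    simp [hA0] at h0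
    simpa using h0
  refine ⟨ε ^ 2, by positivity, fun t ht ht0 => ?_⟩
  rcases eq_or_lt_of_le ht0 with heq | hlt
  · subst heq; exact ⟨hA0, hB0⟩
  · set x := Real.sqrt (-t) with hx
    have hxpos : 0 < x := Real.sqrt_pos.2 (by linarith)
    have hx2 : x ^ 2 = -t := Real.sq_sqrt (by linarith)
    have hxε : x < ε := by
      nlinarith [hx2]
    have := key x hxpos hxε
    rw [hx2] at this
    simpa using this
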